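/- (Core of Theorem 2, the reduced tight frame.) Let γ = [γ_1,…,γ_ℓ] be a partition of n, π ∈ Π_γ, and v ∈ ℝ^{Π_γ} a unit vector such that for every pair i ≠ j with γ_i = γ_j = t, v satisfies the sign symmetry v(ρ^{(ij)}) = (−1)^t·v(ρ) for all ρ ∈ Π_γ. Let M := span{ρ_L(σ)(B_π v) : σ ∈ S_n} ⊆ ℝ^{S_n} and suppose M is irreducible as a left S_n-module, with d := dim M. Let k_i denote the multiplicity of the part i in γ, set z_γ := m_γ/∏_i k_i!, and let Π̄_γ ⊆ Π_γ contain exactly one representative from each orbit of Π_γ under the action which permutes blocks of equal size (so |Π̄_γ| = z_γ). Then {√(d·m_γ/(n!·z_γ))·B_π̄ v : π̄ ∈ Π̄_γ} is a tight Parseval frame for M: for every f ∈ M, ∑_{π̄∈Π̄_γ} |⟨f, √(d·m_γ/(n!·z_γ))·B_π̄ v⟩|² = ‖f‖². -/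

import Mathlib

open Finset
open scoped Nat

/-- Ordered set partitions of `Fin n` of shape `γ : Fin ℓ → ℕ`: functions
`μ : Fin n → Fin ℓ` whose `j`-th block `μ⁻¹(j)` has exactly `γ j` elements. -/
def OSP (n ℓ : ℕ) (γ : Fin ℓ → ℕ) : Type :=
  {μ : Fin n → Fin ℓ // ∀ j : Fin ℓ, (Finset.univ.filter fun x => μ x = j).card = γ j}

instance {n ℓ : ℕ} {γ : Fin ℓ → ℕ} : Fintype (OSP n ℓ γ) := by
  unfold OSP; infer_instance

instance {n ℓ : ℕ} {γ : Fin ℓ → ℕ} : DecidableEq (OSP n ℓ γ) := by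
  unfold OSP; infer_instance

/-- The left action of `S_n` on ordered set partitions: `(σ · μ)(x) = μ (σ⁻¹ x)`. -/
def ospAct {n ℓ : ℕ} {γ : Fin ℓ → ℕ} (σ : Equiv.Perm (Fin n)) (μ : OSP n ℓ γ) : OSP n ℓ γ :=
  ⟨fun x => μ.1 (σ.symm x), fun j => by
    rw [← μ.2 j, ← Fintype.card_subtype, ← Fintype.card_subtype]
    exact Fintype.card_congr (σ.symm.subtypeEquiv fun a => Iff.rfl)⟩

/-- The characteristic ("lifting") map `B_π : ℝ^{Π_γ} → ℝ^{S_n}` given by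
`(B_π x)(σ) = x (σ⁻¹ · π)`. -/
def liftB {n ℓ : ℕ} {γ : Fin ℓ → ℕ} (π : OSP n ℓ γ) (x : OSP n ℓ γ → ℝ) :
    Equiv.Perm (Fin n) → ℝ :=
  fun σ => x (ospAct σ⁻¹ π)

/-- `ρ^{(ij)}`: the ordered set partition obtained from `ρ` by swapping blocks `i` and `j`
(of equal size), i.e. post-composing with the transposition of `i` and `j`. -/
def blockSwap {n ℓ : ℕ} {γ : Fin ℓ → ℕ} (i j : Fin ℓ) (hij : γ i = γ j)
    (ρ : OSP n ℓ γ) : OSP n ℓ γ :=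
  ⟨fun x => Equiv.swap i j (ρ.1 x), fun k => by
    have hγ : γ (Equiv.swap i j k) = γ k := by
      rcases eq_or_ne k i with rfl | hki
      · rw [Equiv.swap_apply_left]; exact hij.symm
      rcases eq_or_ne k j with rfl | hkj
      · rw [Equiv.swap_apply_right]; exact hij
      · rw [Equiv.swap_apply_of_ne_of_ne hki hkj]
    calc (Finset.univ.filter fun x => Equiv.swap i j (ρ.1 x) = k).card
        = (Finset.univ.filter fun x => ρ.1 x = Equiv.swap i j k).card := by
          congr 1; ext x
          simp only [Finset.mem_filter, Finset.mem_univ, true_and]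
          rw [Equiv.swap_apply_eq_iff]
      _ = γ (Equiv.swap i j k) := ρ.2 _
      _ = γ k := hγ⟩

/-- The left regular representation of `S_n` on `ℝ^{S_n}`: `(ρ_L(τ) f)(σ) = f (τ⁻¹ σ)`. -/
def rhoL {n : ℕ} (τ : Equiv.Perm (Fin n)) (f : Equiv.Perm (Fin n) → ℝ) :
    Equiv.Perm (Fin n) → ℝ :=
  fun σ => f (τ⁻¹ * σ)

/-- Two ordered set partitions are in the same orbit under permutations of blocks of equal
size iff one is obtained from the other by post-composing with a block-size preserving
permutation of `{1,…,ℓ}` (equivalently, they have the same underlying unordered blocks). -/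
def SameBlocks {n ℓ : ℕ} {γ : Fin ℓ → ℕ} (μ ν : OSP n ℓ γ) : Prop :=
  ∃ c : Equiv.Perm (Fin ℓ), (∀ k : Fin ℓ, γ (c k) = γ k) ∧ ν.1 = fun x => c (μ.1 x)

section AuxRTF
variable {n ℓ : ℕ} {γ : Fin ℓ → ℕ}

lemma ospAct_mul (σ τ : Equiv.Perm (Fin n)) (μ : OSP n ℓ γ) :
    ospAct (σ * τ) μ = ospAct σ (ospAct τ μ) := Subtype.ext rfl

lemma ospAct_one (μ : OSP n ℓ γ) : ospAct 1 μ = μ := Subtype.ext rfl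

/-- the permutation equivalence of `OSP`. -/
def ospEquiv (σ : Equiv.Perm (Fin n)) : OSP n ℓ γ ≃ OSP n ℓ γ where
  toFun := ospAct σ
  invFun := ospAct σ⁻¹
  left_inv := fun μ => by rw [← ospAct_mul, inv_mul_cancel, ospAct_one]
  right_inv := fun μ => by rw [← ospAct_mul, mul_inv_cancel, ospAct_one]

/-- post-composition with a size-preserving permutation of block labels. -/
def postAct (c : Equiv.Perm (Fin ℓ)) (hc : ∀ k, γ (c k) = γ k) (μ : OSP n ℓ γ) :
    OSP n ℓ γ :=
  ⟨fun x => c (μ.1 x), fun k => by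
    have h1 : (Finset.univ.filter fun x => c (μ.1 x) = k).card
        = (Finset.univ.filter fun x => μ.1 x = c.symm k).card := by
      congr 1; ext x
      simp only [Finset.mem_filter, Finset.mem_univ, true_and]
      constructor
      · intro h; rw [← h, Equiv.symm_apply_apply]
      · intro h; rw [h, Equiv.apply_symm_apply]
    rw [h1, μ.2]
    have h2 := hc (c.symm k)
    rw [Equiv.apply_symm_apply] at h2
    exact h2.symm⟩

lemma postAct_ospAct (c : Equiv.Perm (Fin ℓ)) (hc : ∀ k, γ (c k) = γ k)
    (σ : Equiv.Perm (Fin n)) (μ : OSP n ℓ γ) :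
    ospAct σ (postAct c hc μ) = postAct c hc (ospAct σ μ) := Subtype.ext rfl

lemma liftB_postAct (c : Equiv.Perm (Fin ℓ)) (hc : ∀ k, γ (c k) = γ k)
    (μ : OSP n ℓ γ) (v : OSP n ℓ γ → ℝ) :
    liftB (postAct c hc μ) v = fun σ => v (postAct c hc (ospAct σ⁻¹ μ)) := by
  funext σ
  show v (ospAct σ⁻¹ (postAct c hc μ)) = _
  rw [postAct_ospAct]

lemma liftB_rhoL (σ : Equiv.Perm (Fin n)) (π : OSP n ℓ γ) (v : OSP n ℓ γ → ℝ) :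
    rhoL σ (liftB π v) = liftB (ospAct σ π) v := by
  funext τ
  show v (ospAct (σ⁻¹ * τ)⁻¹ π) = v (ospAct τ⁻¹ (ospAct σ π))
  rw [← ospAct_mul, mul_inv_rev, inv_inv]

lemma osp_trans (μ ν : OSP n ℓ γ) : ∃ σ : Equiv.Perm (Fin n), ospAct σ μ = ν := by
  classical
  let e : ∀ j : Fin ℓ, {x // μ.1 x = j} ≃ {x // ν.1 x = j} := fun j =>
    Fintype.equivOfCardEq (by
      rw [Fintype.card_subtype, Fintype.card_subtype, μ.2, ν.2])
  let σ : Equiv.Perm (Fin n) :=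
    ((Equiv.sigmaFiberEquiv μ.1).symm.trans (Equiv.sigmaCongrRight e)).trans
      (Equiv.sigmaFiberEquiv ν.1)
  have hσ : ∀ y, ν.1 (σ y) = μ.1 y := fun y => (e (μ.1 y) ⟨y, rfl⟩).2
  refine ⟨σ, Subtype.ext (funext fun x => ?_)⟩
  show μ.1 (σ.symm x) = ν.1 x
  rw [← hσ (σ.symm x), Equiv.apply_symm_apply]

lemma sameBlocks_ospAct {μ ν : OSP n ℓ γ} (σ : Equiv.Perm (Fin n))
    (h : SameBlocks μ ν) : SameBlocks (ospAct σ μ) (ospAct σ ν) := by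
  obtain ⟨c, hc, hfun⟩ := h
  exact ⟨c, hc, funext fun x => congrFun hfun (σ.symm x)⟩

lemma sign_aux (v : OSP n ℓ γ → ℝ)
    (hsym : ∀ (i j : Fin ℓ), i ≠ j → ∀ hij : γ i = γ j, ∀ ρ : OSP n ℓ γ,
      v (blockSwap i j hij ρ) = (-1 : ℝ) ^ (γ i) * v ρ) :
    ∀ (N : ℕ) (c : Equiv.Perm (Fin ℓ)) (hc : ∀ k, γ (c k) = γ k),
      c.support.card ≤ N →
      ∃ ε : ℝ, ε ^ 2 = 1 ∧ ∀ μ : OSP n ℓ γ, v (postAct c hc μ) = ε * v μ := by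
  intro N
  induction N with
  | zero =>
    intro c hc hcard
    have hc1 : c = 1 := by
      rw [← Equiv.Perm.support_eq_empty_iff]
      exact Finset.card_eq_zero.mp (Nat.le_zero.mp hcard)
    subst hc1
    refine ⟨1, one_pow 2, fun μ => ?_⟩
    rw [one_mul]
    congr 1
  | succ N ih =>
    intro c hc hcard
    by_cases hc1 : c = 1
    · subst hc1
      refine ⟨1, one_pow 2, fun μ => ?_⟩
      rw [one_mul]; congr 1
    · obtain ⟨i, hi⟩ : ∃ i, c i ≠ i := by
        by_contra h
        push_neg at h
        exact hc1 (Equiv.ext fun x => by rw [h x, Equiv.Perm.one_apply])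
      have hij : i ≠ c i := fun h => hi h.symm
      have hγij : γ i = γ (c i) := (hc i).symm
      set c' : Equiv.Perm (Fin ℓ) := Equiv.swap i (c i) * c with hc'def
      have hc' : ∀ k, γ (c' k) = γ k := by
        intro k
        show γ (Equiv.swap i (c i) (c k)) = γ k
        rcases eq_or_ne (c k) i with h | h
        · rw [h, Equiv.swap_apply_left, hc i, ← h]; exact hc k
        rcases eq_or_ne (c k) (c i) with h2 | h2
        · rw [h2, Equiv.swap_apply_right, c.injective h2]
        · rw [Equiv.swap_apply_of_ne_of_ne h h2]; exact hc k
      have hsub : c'.support ⊆ c.support.erase i := by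
        intro x hx
        rw [Equiv.Perm.mem_support] at hx
        rw [Finset.mem_erase, Equiv.Perm.mem_support]
        constructor
        · rintro rfl
          apply hx
          show Equiv.swap x (c x) (c x) = x
          rw [Equiv.swap_apply_right]
        · intro hfix
          apply hx
          show Equiv.swap i (c i) (c x) = x
          rw [hfix]
          have hxi : x ≠ i := by rintro rfl; exact hi hfix
          have hxci : x ≠ c i := by
            rintro rfl
            exact hxi (c.injective hfix)
          rw [Equiv.swap_apply_of_ne_of_ne hxi hxci]
      have hcard' : c'.support.card ≤ N := by
        have h1 : i ∈ c.support := Equiv.Perm.mem_support.mpr hi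
        have h2 := Finset.card_le_card hsub
        have h3 := Finset.card_erase_of_mem h1
        have h4 : 1 ≤ c.support.card := Finset.card_pos.mpr ⟨i, h1⟩
        omega
      obtain ⟨ε, hε2, hεv⟩ := ih c' hc' hcard'
      refine ⟨(-1 : ℝ) ^ (γ i) * ε, ?_, fun μ => ?_⟩
      · rw [mul_pow, hε2, mul_one, ← pow_mul, mul_comm (γ i) 2, pow_mul, neg_one_sq,
          one_pow]
      · have key : postAct c' hc' μ = blockSwap i (c i) hγij (postAct c hc μ) :=
          Subtype.ext rfl
        have hA := hsym i (c i) hij hγij (postAct c hc μ)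
        have hB := hεv μ
        rw [key, hA] at hB
        have hpow : (-1 : ℝ) ^ (γ i) * (-1 : ℝ) ^ (γ i) = 1 := by
          rw [← pow_add, ← two_mul, pow_mul, neg_one_sq, one_pow]
        calc v (postAct c hc μ)
            = ((-1 : ℝ) ^ (γ i) * (-1 : ℝ) ^ (γ i)) * v (postAct c hc μ) := by
              rw [hpow, one_mul]
          _ = (-1 : ℝ) ^ (γ i) * ((-1 : ℝ) ^ (γ i) * v (postAct c hc μ)) := by ring
          _ = (-1 : ℝ) ^ (γ i) * (ε * v μ) := by rw [hB]
          _ = (-1 : ℝ) ^ (γ i) * ε * v μ := by ring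

lemma sign_lemma (v : OSP n ℓ γ → ℝ)
    (hsym : ∀ (i j : Fin ℓ), i ≠ j → ∀ hij : γ i = γ j, ∀ ρ : OSP n ℓ γ,
      v (blockSwap i j hij ρ) = (-1 : ℝ) ^ (γ i) * v ρ)
    (c : Equiv.Perm (Fin ℓ)) (hc : ∀ k, γ (c k) = γ k) :
    ∃ ε : ℝ, ε ^ 2 = 1 ∧ ∀ μ : OSP n ℓ γ, v (postAct c hc μ) = ε * v μ :=
  sign_aux v hsym c.support.card c hc le_rfl

end AuxRTF

/-- core of Theorem 2 of the paper, the reduced tight frame: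
let `γ` be a partition of `n` and `v` a unit vector of `ℝ^{Π_γ}` with the sign symmetry
`v(ρ^{(ij)}) = (−1)^t·v(ρ)` for all pairs of equal parts `γ_i = γ_j = t`. Let `M` be the
(irreducible) left `S_n`-module generated by `B_π v`, `d = dim M`, and let `R = Π̄_γ` be a
set of representatives, one from each orbit of `Π_γ` under permuting blocks of equal size
(so `|Π̄_γ| = z_γ`). Then `{√(d·m_γ/(n!·z_γ))·B_π̄ v : π̄ ∈ Π̄_γ}` is a tight Parseval
frame for `M`. -/
theorem reduced_tight_parseval_frame {n ℓ : ℕ} (hn : 1 ≤ n) (γ : Fin ℓ → ℕ)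
    (hpart : Antitone γ) (hsum : ∑ j, γ j = n) (π : OSP n ℓ γ)
    (v : OSP n ℓ γ → ℝ) (hv : ∑ μ : OSP n ℓ γ, v μ ^ 2 = 1)
    (hsym : ∀ (i j : Fin ℓ), i ≠ j → ∀ hij : γ i = γ j, ∀ ρ : OSP n ℓ γ,
      v (blockSwap i j hij ρ) = (-1 : ℝ) ^ (γ i) * v ρ)
    (M : Submodule ℝ (Equiv.Perm (Fin n) → ℝ))
    (hM : M = Submodule.span ℝ {f | ∃ σ : Equiv.Perm (Fin n), f = rhoL σ (liftB π v)})
    (hMbot : M ≠ ⊥)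
    (hirr : ∀ N : Submodule ℝ (Equiv.Perm (Fin n) → ℝ), N ≤ M →
      (∀ τ : Equiv.Perm (Fin n), ∀ f ∈ N, rhoL τ f ∈ N) → N = ⊥ ∨ N = M)
    (d : ℕ) (hd : d = Module.finrank ℝ M)
    (R : Finset (OSP n ℓ γ))
    (hR : ∀ μ : OSP n ℓ γ, ∃! πb : OSP n ℓ γ, πb ∈ R ∧ SameBlocks μ πb) :
    ∀ f ∈ M,
      ∑ πb ∈ R,
        (∑ τ : Equiv.Perm (Fin n), f τ *
          (Real.sqrt ((d * Fintype.card (OSP n ℓ γ) : ℝ) / ((n ! : ℝ) * R.card))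
            * liftB πb v τ)) ^ 2
      = ∑ τ : Equiv.Perm (Fin n), f τ ^ 2 := by
  classical
  intro f hf
  set C := Real.sqrt ((d * Fintype.card (OSP n ℓ γ) : ℝ) / ((n ! : ℝ) * R.card)) with hC
  set b : OSP n ℓ γ → EuclideanSpace ℝ (Equiv.Perm (Fin n)) := fun μ => WithLp.toLp 2 (liftB μ v) with hbdef
  show ∑ πb ∈ R, (∑ τ : Equiv.Perm (Fin n), f τ * (C * b πb τ)) ^ 2
      = ∑ τ : Equiv.Perm (Fin n), f τ ^ 2
  -- inner product as explicit sum
  have hinner : ∀ g h : EuclideanSpace ℝ (Equiv.Perm (Fin n)),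
      (inner ℝ g h : ℝ) = ∑ τ : Equiv.Perm (Fin n), g τ * h τ := fun g h => by
    simp [PiLp.inner_apply, RCLike.inner_apply, mul_comm]
  -- frame operator
  set T : EuclideanSpace ℝ (Equiv.Perm (Fin n)) →ₗ[ℝ] EuclideanSpace ℝ (Equiv.Perm (Fin n)) :=
    ∑ μ : OSP n ℓ γ, ((innerSL ℝ (b μ)).toLinearMap).smulRight (b μ) with hTdef
  have hTapp : ∀ g : EuclideanSpace ℝ (Equiv.Perm (Fin n)),
      T g = ∑ μ : OSP n ℓ γ, (inner ℝ (b μ) g : ℝ) • b μ := fun g => by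
    rw [hTdef]
    simp [LinearMap.sum_apply, LinearMap.smulRight_apply]
  -- all frame vectors lie in M
  have hbM : ∀ μ : OSP n ℓ γ, (b μ).ofLp ∈ M := by
    intro μ
    obtain ⟨σ, hσ⟩ := osp_trans π μ
    rw [hM]
    exact Submodule.subset_span ⟨σ, by rw [liftB_rhoL, hσ]⟩
  -- M is invariant under rhoL
  have rhoL_mul : ∀ (τ σ : Equiv.Perm (Fin n)) (g : Equiv.Perm (Fin n) → ℝ),
      rhoL τ (rhoL σ g) = rhoL (τ * σ) g := by
    intro τ σ g
    funext ρ
    show g (σ⁻¹ * (τ⁻¹ * ρ)) = g ((τ * σ)⁻¹ * ρ)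
    rw [mul_inv_rev, mul_assoc]
  have hMinv : ∀ τ : Equiv.Perm (Fin n), ∀ g ∈ M, rhoL τ g ∈ M := by
    intro τ g hg
    rw [hM] at hg ⊢
    induction hg using Submodule.span_induction with
    | mem x hx =>
      obtain ⟨σ, rfl⟩ := hx
      exact Submodule.subset_span ⟨τ * σ, (rhoL_mul τ σ _).symm⟩
    | zero => exact (show rhoL τ 0 = 0 from rfl) ▸ Submodule.zero_mem _
    | add x y hx hy ihx ihy =>
      exact (show rhoL τ (x + y) = rhoL τ x + rhoL τ y from rfl) ▸ Submodule.add_mem _ ihx ihy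
    | smul a x hx ih =>
      exact (show rhoL τ (a • x) = a • rhoL τ x from rfl) ▸ Submodule.smul_mem _ a ih
  -- rhoL as a linear map on E
  let rhoLM : Equiv.Perm (Fin n) →
      (EuclideanSpace ℝ (Equiv.Perm (Fin n)) →ₗ[ℝ] EuclideanSpace ℝ (Equiv.Perm (Fin n))) :=
    fun σ => { toFun := fun g => WithLp.toLp 2 (rhoL σ g.ofLp), map_add' := fun _ _ => rfl, map_smul' := fun _ _ => rfl }
  have hrhoLM : ∀ σ g, rhoLM σ g = WithLp.toLp 2 (rhoL σ g.ofLp) := fun _ _ => rfl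
  have hbrho : ∀ (σ : Equiv.Perm (Fin n)) (μ : OSP n ℓ γ),
      rhoLM σ (b μ) = b (ospAct σ μ) := fun σ μ => congrArg (WithLp.toLp 2) (liftB_rhoL σ μ v)
  have hospcancel : ∀ (σ : Equiv.Perm (Fin n)) (μ : OSP n ℓ γ),
      ospAct σ⁻¹ (ospAct σ μ) = μ := fun σ μ => by
    rw [← ospAct_mul, inv_mul_cancel, ospAct_one]
  -- T is equivariant
  have hTequi : ∀ (σ : Equiv.Perm (Fin n)) (g : EuclideanSpace ℝ (Equiv.Perm (Fin n))),
      T (rhoLM σ g) = rhoLM σ (T g) := by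
    intro σ g
    rw [hTapp, hTapp]
    have h1 : ∀ μ, (inner ℝ (b μ) (rhoLM σ g) : ℝ) = (inner ℝ (b (ospAct σ⁻¹ μ)) g : ℝ) := by
      intro μ
      rw [hinner, hinner]
      refine Fintype.sum_equiv (Equiv.mulLeft σ⁻¹) _ _ fun τ => ?_
      show b μ τ * rhoLM σ g τ = b (ospAct σ⁻¹ μ) (σ⁻¹ * τ) * g (σ⁻¹ * τ)
      rw [← hbrho]
      show b μ τ * g (σ⁻¹ * τ) = b μ ((σ⁻¹)⁻¹ * (σ⁻¹ * τ)) * g (σ⁻¹ * τ)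
      rw [inv_inv, mul_inv_cancel_left]
    calc ∑ μ : OSP n ℓ γ, (inner ℝ (b μ) (rhoLM σ g) : ℝ) • b μ
        = ∑ μ : OSP n ℓ γ, (inner ℝ (b (ospAct σ⁻¹ μ)) g : ℝ) • b μ :=
          Finset.sum_congr rfl fun μ _ => by rw [h1]
      _ = ∑ ν : OSP n ℓ γ, (inner ℝ (b ν) g : ℝ) • b (ospAct σ ν) :=
          (Fintype.sum_equiv (ospEquiv σ) _ _ fun ν => by
            show (inner ℝ (b ν) g : ℝ) • b (ospAct σ ν)
                = (inner ℝ (b (ospAct σ⁻¹ (ospAct σ ν))) g : ℝ) • b (ospAct σ ν)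
            rw [hospcancel]).symm
      _ = rhoLM σ (∑ ν : OSP n ℓ γ, (inner ℝ (b ν) g : ℝ) • b ν) := by
          rw [map_sum]
          exact Finset.sum_congr rfl fun ν _ => by
            rw [map_smul]
            congr 1
  -- T is symmetric
  have hTsym : T.IsSymmetric := by
    intro x y
    rw [hTapp, hTapp, sum_inner, inner_sum]
    refine Finset.sum_congr rfl fun μ _ => ?_
    rw [real_inner_smul_left, real_inner_smul_right, real_inner_comm (b μ) x]
    ring
  -- the submodule viewed inside Euclidean space
  let M' : Submodule ℝ (EuclideanSpace ℝ (Equiv.Perm (Fin n))) := M.comap (WithLp.linearEquiv 2 ℝ (Equiv.Perm (Fin n) → ℝ)).toLinearMap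
  have hTmem : ∀ x ∈ M', T x ∈ M' := by
    intro x hx
    rw [hTapp]
    exact Submodule.sum_mem _ fun μ _ => Submodule.smul_mem _ _ (hbM μ)
  have hfr : Module.finrank ℝ M' = d := by
    rw [hd, show M' = M.map (WithLp.linearEquiv 2 ℝ (Equiv.Perm (Fin n) → ℝ)).symm.toLinearMap from
      Submodule.comap_equiv_eq_map_symm _ _, LinearEquiv.finrank_map_eq]
  have hdpos : 0 < d := by
    rcases Nat.eq_zero_or_pos d with h0 | h
    · exact absurd (Submodule.finrank_eq_zero.mp (by rw [← hd]; exact h0)) hMbot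
    · exact h
  let Trest := T.restrict hTmem
  have hTrsym : Trest.IsSymmetric := hTsym.restrict_invariant hTmem
  let eb := hTrsym.eigenvectorBasis hfr
  set lam : ℝ := hTrsym.eigenvalues hfr ⟨0, hdpos⟩ with hlamdef
  have hu0 : Trest (eb ⟨0, hdpos⟩) = lam • eb ⟨0, hdpos⟩ := by
    exact hTrsym.apply_eigenvectorBasis hfr ⟨0, hdpos⟩
  -- the eigenspace as a submodule of the ambient space
  have hTM : ∀ x, x ∈ M' → T x = lam • x := by
    have hle : (M' ⊓ LinearMap.ker (T - lam • LinearMap.id)).comap (WithLp.linearEquiv 2 ℝ (Equiv.Perm (Fin n) → ℝ)).symm.toLinearMap ≤ M :=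
      fun x hx => (Submodule.mem_inf.mp (Submodule.mem_comap.mp hx)).1
    have hinv : ∀ τ : Equiv.Perm (Fin n),
        ∀ g ∈ (M' ⊓ LinearMap.ker (T - lam • LinearMap.id)).comap (WithLp.linearEquiv 2 ℝ (Equiv.Perm (Fin n) → ℝ)).symm.toLinearMap,
          rhoL τ g ∈ (M' ⊓ LinearMap.ker (T - lam • LinearMap.id)).comap (WithLp.linearEquiv 2 ℝ (Equiv.Perm (Fin n) → ℝ)).symm.toLinearMap := by
      intro τ g hg
      obtain ⟨hg1, hg2⟩ := Submodule.mem_inf.mp (Submodule.mem_comap.mp hg)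
      rw [LinearMap.mem_ker, LinearMap.sub_apply, LinearMap.smul_apply, LinearMap.id_apply,
        sub_eq_zero] at hg2
      change T (WithLp.toLp 2 g) = lam • WithLp.toLp 2 g at hg2
      refine Submodule.mem_comap.mpr (Submodule.mem_inf.mpr ⟨hMinv τ g hg1, ?_⟩)
      rw [LinearMap.mem_ker, LinearMap.sub_apply, LinearMap.smul_apply, sub_eq_zero]
      show T (rhoLM τ (WithLp.toLp 2 g)) = lam • rhoLM τ (WithLp.toLp 2 g)
      calc T (rhoLM τ (WithLp.toLp 2 g)) = rhoLM τ (T (WithLp.toLp 2 g)) := hTequi τ _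
        _ = rhoLM τ (lam • WithLp.toLp 2 g) := by rw [hg2]
        _ = lam • rhoLM τ (WithLp.toLp 2 g) := map_smul _ _ _
    rcases hirr _ hle hinv with hbot | htop
    · exfalso
      have humem : ((eb ⟨0, hdpos⟩ : M') : EuclideanSpace ℝ (Equiv.Perm (Fin n))).ofLp
          ∈ (M' ⊓ LinearMap.ker (T - lam • LinearMap.id)).comap (WithLp.linearEquiv 2 ℝ (Equiv.Perm (Fin n) → ℝ)).symm.toLinearMap := by
        refine Submodule.mem_comap.mpr (Submodule.mem_inf.mpr ⟨(eb ⟨0, hdpos⟩).2, ?_⟩)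
        rw [LinearMap.mem_ker, LinearMap.sub_apply, LinearMap.smul_apply, sub_eq_zero]
        show T ((eb ⟨0, hdpos⟩ : M') : EuclideanSpace ℝ (Equiv.Perm (Fin n))) = lam • ((eb ⟨0, hdpos⟩ : M') : EuclideanSpace ℝ (Equiv.Perm (Fin n)))
        have h1 := congrArg Subtype.val hu0
        rw [LinearMap.restrict_apply] at h1
        simpa using h1
      rw [hbot] at humem
      have := eb.orthonormal.ne_zero ⟨0, hdpos⟩
      exact this (by
        apply Subtype.ext
        simpa using humem)
    · intro x hx
      have hx' : x.ofLp ∈ (M' ⊓ LinearMap.ker (T - lam • LinearMap.id)).comap (WithLp.linearEquiv 2 ℝ (Equiv.Perm (Fin n) → ℝ)).symm.toLinearMap := by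
        rw [htop]; exact hx
      have h4 := (Submodule.mem_inf.mp (Submodule.mem_comap.mp hx')).2
      rw [LinearMap.mem_ker, LinearMap.sub_apply, LinearMap.smul_apply] at h4
      exact sub_eq_zero.mp h4
  -- trace computation : lam * d = n!
  have hsum1 : ∀ σ : Equiv.Perm (Fin n), ∑ μ : OSP n ℓ γ, b μ σ * b μ σ = 1 := by
    intro σ
    calc ∑ μ : OSP n ℓ γ, b μ σ * b μ σ
        = ∑ μ : OSP n ℓ γ, v (ospAct σ⁻¹ μ) ^ 2 :=
          Finset.sum_congr rfl fun μ _ => by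
            show v (ospAct σ⁻¹ μ) * v (ospAct σ⁻¹ μ) = v (ospAct σ⁻¹ μ) ^ 2
            rw [← pow_two]
      _ = ∑ ρ : OSP n ℓ γ, v ρ ^ 2 := Fintype.sum_equiv (ospEquiv σ⁻¹) _ _ fun μ => rfl
      _ = 1 := hv
  have hnorm : ∑ μ : OSP n ℓ γ, (inner ℝ (b μ) (b μ) : ℝ) = (n ! : ℝ) := by
    calc ∑ μ : OSP n ℓ γ, (inner ℝ (b μ) (b μ) : ℝ)
        = ∑ μ : OSP n ℓ γ, ∑ σ : Equiv.Perm (Fin n), b μ σ * b μ σ :=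
          Finset.sum_congr rfl fun μ _ => hinner _ _
      _ = ∑ σ : Equiv.Perm (Fin n), ∑ μ : OSP n ℓ γ, b μ σ * b μ σ := Finset.sum_comm
      _ = ∑ _σ : Equiv.Perm (Fin n), (1 : ℝ) :=
          Finset.sum_congr rfl fun σ _ => hsum1 σ
      _ = (n ! : ℝ) := by
          rw [Finset.sum_const, Finset.card_univ, Fintype.card_perm, Fintype.card_fin,
            nsmul_eq_mul, mul_one]
  let ui : Fin d → EuclideanSpace ℝ (Equiv.Perm (Fin n)) := fun i => ((eb i : M') : _)
  have huiM : ∀ i, ui i ∈ M' := fun i => (eb i).2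
  have huinorm : ∀ i, (inner ℝ (ui i) (ui i) : ℝ) = 1 := by
    intro i
    have h1 : (inner ℝ (eb i) (eb i) : ℝ) = 1 := by
      have h2 := eb.orthonormal
      rw [orthonormal_iff_ite] at h2
      simpa using h2 i i
    rw [← h1, Submodule.coe_inner]
  have hPar : ∀ μ : OSP n ℓ γ,
      ∑ i : Fin d, (inner ℝ (b μ) (ui i) : ℝ) * (inner ℝ (b μ) (ui i) : ℝ)
        = (inner ℝ (b μ) (b μ) : ℝ) := by
    intro μ
    have h1 := eb.sum_inner_mul_inner (⟨b μ, hbM μ⟩ : M') (⟨b μ, hbM μ⟩ : M')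
    have h2 : ∀ i : Fin d, (inner ℝ (b μ) (ui i) : ℝ)
        = (inner ℝ (⟨b μ, hbM μ⟩ : M') (eb i) : ℝ) := fun i =>
      (Submodule.coe_inner M' (⟨b μ, hbM μ⟩ : M') (eb i)).symm
    calc ∑ i : Fin d, (inner ℝ (b μ) (ui i) : ℝ) * (inner ℝ (b μ) (ui i) : ℝ)
        = ∑ i : Fin d, (inner ℝ (⟨b μ, hbM μ⟩ : M') (eb i) : ℝ)
            * (inner ℝ (eb i) (⟨b μ, hbM μ⟩ : M') : ℝ) :=
          Finset.sum_congr rfl fun i _ => by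
            rw [h2 i, real_inner_comm (eb i) (⟨b μ, hbM μ⟩ : M')]
      _ = (inner ℝ (⟨b μ, hbM μ⟩ : M') (⟨b μ, hbM μ⟩ : M') : ℝ) := h1
      _ = (inner ℝ (b μ) (b μ) : ℝ) := by rw [Submodule.coe_inner]
  have htrace : lam * (d : ℝ) = (n ! : ℝ) := by
    calc lam * (d : ℝ) = ∑ _i : Fin d, lam := by
          rw [Finset.sum_const, Finset.card_univ, Fintype.card_fin, nsmul_eq_mul, mul_comm]
      _ = ∑ i : Fin d, (inner ℝ (ui i) (T (ui i)) : ℝ) :=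
          Finset.sum_congr rfl fun i _ => by
            rw [hTM _ (huiM i), real_inner_smul_right, huinorm, mul_one]
      _ = ∑ i : Fin d, ∑ μ : OSP n ℓ γ,
            (inner ℝ (b μ) (ui i) : ℝ) * (inner ℝ (b μ) (ui i) : ℝ) := by
          refine Finset.sum_congr rfl fun i _ => ?_
          rw [hTapp, inner_sum]
          exact Finset.sum_congr rfl fun μ _ => by
            rw [real_inner_smul_right, real_inner_comm (ui i) (b μ)]
      _ = ∑ μ : OSP n ℓ γ, ∑ i : Fin d,
            (inner ℝ (b μ) (ui i) : ℝ) * (inner ℝ (b μ) (ui i) : ℝ) := Finset.sum_comm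
      _ = ∑ μ : OSP n ℓ γ, (inner ℝ (b μ) (b μ) : ℝ) :=
          Finset.sum_congr rfl fun μ _ => hPar μ
      _ = (n ! : ℝ) := hnorm
  -- full frame identity
  have hfull : ∑ μ : OSP n ℓ γ, (∑ τ : Equiv.Perm (Fin n), f τ * b μ τ) ^ 2
      = lam * ∑ τ : Equiv.Perm (Fin n), f τ ^ 2 := by
    have e1 : ∀ μ : OSP n ℓ γ, ∑ τ : Equiv.Perm (Fin n), f τ * b μ τ
        = (inner ℝ (b μ) (WithLp.toLp 2 f) : ℝ) := fun μ => by
      rw [hinner]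
      exact Finset.sum_congr rfl fun τ _ => mul_comm _ _
    calc ∑ μ : OSP n ℓ γ, (∑ τ : Equiv.Perm (Fin n), f τ * b μ τ) ^ 2
        = ∑ μ : OSP n ℓ γ, (inner ℝ (b μ) (WithLp.toLp 2 f) : ℝ)
            * (inner ℝ (b μ) (WithLp.toLp 2 f) : ℝ) :=
          Finset.sum_congr rfl fun μ _ => by rw [e1 μ, pow_two]
      _ = (inner ℝ (T (WithLp.toLp 2 f))
            (WithLp.toLp 2 f) : ℝ) := by
          rw [hTapp, sum_inner]
          exact Finset.sum_congr rfl fun μ _ => by rw [real_inner_smul_left]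
      _ = lam * ∑ τ : Equiv.Perm (Fin n), f τ ^ 2 := by
          rw [hTM (WithLp.toLp 2 f) hf, real_inner_smul_left, hinner]
          congr 1
          exact Finset.sum_congr rfl fun τ _ => (pow_two _).symm
  -- orbit representatives
  have hrep := fun μ => (hR μ).choose_spec
  set rep : OSP n ℓ γ → OSP n ℓ γ := fun μ => (hR μ).choose with hrepdef
  have hrepR : ∀ μ, rep μ ∈ R := fun μ => (hrep μ).1.1
  have hrepSB : ∀ μ, SameBlocks μ (rep μ) := fun μ => (hrep μ).1.2
  have hrep_iff : ∀ πb, πb ∈ R → ∀ μ, rep μ = πb ↔ SameBlocks μ πb := by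
    intro πb hπb μ
    constructor
    · rintro rfl; exact hrepSB μ
    · intro h; exact ((hrep μ).2 πb ⟨hπb, h⟩).symm
  -- the summand is constant on orbits
  have hgconst : ∀ (μ ν : OSP n ℓ γ), SameBlocks μ ν →
      (∑ τ : Equiv.Perm (Fin n), f τ * b ν τ) ^ 2
        = (∑ τ : Equiv.Perm (Fin n), f τ * b μ τ) ^ 2 := by
    rintro μ ν ⟨c, hc, hfun⟩
    have hν : ν = postAct c hc μ := Subtype.ext hfun
    obtain ⟨ε, hε2, hεv⟩ := sign_lemma v hsym c hc
    have hbv : ∀ τ, b ν τ = ε * b μ τ := by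
      intro τ
      rw [hν]
      show liftB (postAct c hc μ) v τ = ε * liftB μ v τ
      rw [congrFun (liftB_postAct c hc μ v) τ]
      exact hεv _
    calc (∑ τ : Equiv.Perm (Fin n), f τ * b ν τ) ^ 2
        = (ε * ∑ τ : Equiv.Perm (Fin n), f τ * b μ τ) ^ 2 := by
          rw [Finset.mul_sum]
          congr 1
          exact Finset.sum_congr rfl fun τ _ => by rw [hbv]; ring
      _ = ε ^ 2 * (∑ τ : Equiv.Perm (Fin n), f τ * b μ τ) ^ 2 := by ring
      _ = (∑ τ : Equiv.Perm (Fin n), f τ * b μ τ) ^ 2 := by rw [hε2, one_mul]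
  -- all fibers have the same cardinality
  have hfibcard : ∀ πb ∈ R, ∀ πb' ∈ R,
      (Finset.univ.filter fun μ => rep μ = πb).card
        = (Finset.univ.filter fun μ => rep μ = πb').card := by
    intro πb hπb πb' hπb'
    obtain ⟨σ, hσ⟩ := osp_trans πb πb'
    refine Finset.card_bij' (fun μ _ => ospAct σ μ) (fun μ _ => ospAct σ⁻¹ μ) ?_ ?_ ?_ ?_
    · intro μ hμ
      rw [Finset.mem_filter] at hμ ⊢
      refine ⟨Finset.mem_univ _, ?_⟩
      rw [hrep_iff πb' hπb']
      have h2 := sameBlocks_ospAct σ ((hrep_iff πb hπb μ).mp hμ.2)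
      rwa [hσ] at h2
    · intro μ hμ
      rw [Finset.mem_filter] at hμ ⊢
      refine ⟨Finset.mem_univ _, ?_⟩
      rw [hrep_iff πb hπb]
      have h2 := sameBlocks_ospAct σ⁻¹ ((hrep_iff πb' hπb' μ).mp hμ.2)
      rwa [← hσ, hospcancel] at h2
    · intro μ _
      show ospAct σ⁻¹ (ospAct σ μ) = μ
      exact hospcancel σ μ
    · intro μ _
      show ospAct σ (ospAct σ⁻¹ μ) = μ
      rw [← ospAct_mul, mul_inv_cancel, ospAct_one]
  -- fiberwise decomposition
  have hdecomp : ∑ μ : OSP n ℓ γ, (∑ τ : Equiv.Perm (Fin n), f τ * b μ τ) ^ 2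
      = ∑ πb ∈ R, ((Finset.univ.filter fun μ => rep μ = πb).card : ℝ)
          * (∑ τ : Equiv.Perm (Fin n), f τ * b πb τ) ^ 2 := by
    rw [← Finset.sum_fiberwise_of_maps_to (fun μ _ => hrepR μ)
      (fun μ => (∑ τ : Equiv.Perm (Fin n), f τ * b μ τ) ^ 2)]
    refine Finset.sum_congr rfl fun πb hπb => ?_
    calc ∑ μ ∈ Finset.univ.filter (fun μ => rep μ = πb),
          (∑ τ : Equiv.Perm (Fin n), f τ * b μ τ) ^ 2
        = ∑ μ ∈ Finset.univ.filter (fun μ => rep μ = πb),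
            (∑ τ : Equiv.Perm (Fin n), f τ * b πb τ) ^ 2 := by
          refine Finset.sum_congr rfl fun μ hμ => ?_
          rw [Finset.mem_filter] at hμ
          exact (hgconst μ πb ((hrep_iff πb hπb μ).mp hμ.2)).symm
      _ = _ := by rw [Finset.sum_const, nsmul_eq_mul]
  -- common value of the fiber cardinalities
  have hcards : ∀ πb ∈ R,
      ((Finset.univ.filter fun μ => rep μ = πb).card : ℝ) * (R.card : ℝ)
        = (Fintype.card (OSP n ℓ γ) : ℝ) := by
    intro πb hπb
    have h1 : (Finset.univ : Finset (OSP n ℓ γ)).card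
        = ∑ πb' ∈ R, (Finset.univ.filter fun μ => rep μ = πb').card :=
      Finset.card_eq_sum_card_fiberwise fun μ _ => hrepR μ
    have h2 : ∑ πb' ∈ R, (Finset.univ.filter fun μ => rep μ = πb').card
        = R.card * (Finset.univ.filter fun μ => rep μ = πb).card := by
      rw [Finset.sum_congr rfl fun πb' hπb' => hfibcard πb' hπb' πb hπb,
        Finset.sum_const, smul_eq_mul]
    have h3 : Fintype.card (OSP n ℓ γ)
        = R.card * (Finset.univ.filter fun μ => rep μ = πb).card := by
      rw [← Finset.card_univ, h1, h2]
    rw [mul_comm, ← Nat.cast_mul, ← h3]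
  -- numerics
  have hRpos : 0 < R.card := Finset.card_pos.mpr ⟨rep π, hrepR π⟩
  have hR0 : (R.card : ℝ) ≠ 0 := Nat.cast_ne_zero.mpr hRpos.ne'
  have hm0 : (Fintype.card (OSP n ℓ γ) : ℝ) ≠ 0 :=
    Nat.cast_ne_zero.mpr (@Fintype.card_pos _ _ ⟨π⟩).ne'
  have hn!0 : ((n ! : ℕ) : ℝ) ≠ 0 := Nat.cast_ne_zero.mpr (Nat.factorial_ne_zero n)
  have hd0 : (d : ℝ) ≠ 0 := Nat.cast_ne_zero.mpr hdpos.ne'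
  have hC2 : C ^ 2 = (d * Fintype.card (OSP n ℓ γ) : ℝ) / ((n ! : ℝ) * R.card) := by
    rw [hC]
    exact Real.sq_sqrt (div_nonneg (mul_nonneg (Nat.cast_nonneg _) (Nat.cast_nonneg _))
      (mul_nonneg (Nat.cast_nonneg _) (Nat.cast_nonneg _)))
  -- put everything together
  calc ∑ πb ∈ R, (∑ τ : Equiv.Perm (Fin n), f τ * (C * b πb τ)) ^ 2
      = ∑ πb ∈ R, C ^ 2 * (∑ τ : Equiv.Perm (Fin n), f τ * b πb τ) ^ 2 := by
        refine Finset.sum_congr rfl fun πb _ => ?_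
        rw [show ∑ τ : Equiv.Perm (Fin n), f τ * (C * b πb τ)
            = C * ∑ τ : Equiv.Perm (Fin n), f τ * b πb τ by
          rw [Finset.mul_sum]; exact Finset.sum_congr rfl fun τ _ => by ring]
        ring
    _ = ∑ τ : Equiv.Perm (Fin n), f τ ^ 2 := by
        have hA : (R.card : ℝ) * (lam * ∑ τ : Equiv.Perm (Fin n), f τ ^ 2)
            = (Fintype.card (OSP n ℓ γ) : ℝ)
              * ∑ πb ∈ R, (∑ τ : Equiv.Perm (Fin n), f τ * b πb τ) ^ 2 := by
          rw [← hfull, hdecomp, Finset.mul_sum, Finset.mul_sum]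
          exact Finset.sum_congr rfl fun πb hπb => by
            rw [← hcards πb hπb]; ring
        rw [← Finset.mul_sum, hC2, div_mul_eq_mul_div,
          div_eq_iff (mul_ne_zero hn!0 hR0)]
        linear_combination (-(d : ℝ)) * hA
          + (R.card : ℝ) * (∑ τ : Equiv.Perm (Fin n), f τ ^ 2) * htrace
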